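/- arXiv:2604.24291 — 2 statements merged into one kernel-verified Lean document; each statement's English description precedes it below -/
import Mathlib

section
/- Let E be a linear map on d×d complex matrices satisfying E(E_{ij})E(P_k) = δ_{jk} E(E_{ik}) and E(P_k)E(E_{ij}) = δ_{ki} E(E_{kj}) for all i,j,k, and suppose there is a permutation π of {1,…,d} with E(P_i) = P_{π(i)}. Then for each i,j there exists a scalar c_{ij} ∈ ℂ with E(E_{ij}) = c_{ij} |π(i)⟩⟨π(j)|, and c_{ii} = 1 for all i. -/
theorem matrix_unit_images {d : ℕ}
    (E : Matrix (Fin d) (Fin d) ℂ →ₗ[ℂ] Matrix (Fin d) (Fin d) ℂ)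
    (π : Equiv.Perm (Fin d))
    (h1 : ∀ i j k : Fin d,
      E (Matrix.single i j 1) * E (Matrix.single k k 1) =
        if j = k then E (Matrix.single i k 1) else 0)
    (h2 : ∀ i j k : Fin d,
      E (Matrix.single k k 1) * E (Matrix.single i j 1) =
        if k = i then E (Matrix.single k j 1) else 0)
    (hπ : ∀ i : Fin d,
      E (Matrix.single i i 1) = Matrix.single (π i) (π i) 1) :
    ∃ c : Fin d → Fin d → ℂ,
      (∀ i j : Fin d,
        E (Matrix.single i j 1) =
          c i j • Matrix.single (π i) (π j) 1) ∧
      (∀ i : Fin d, c i i = 1) := by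
  refine ⟨fun i j => E (Matrix.single i j 1) (π i) (π j), ?_, ?_⟩
  · intro i j
    set M := E (Matrix.single i j 1) with hM
    have hL : Matrix.single (π i) (π i) 1 * M = M := by
      have := h2 i j i; rw [hπ] at this; simpa using this
    have hR : M * Matrix.single (π j) (π j) 1 = M := by
      have := h1 i j j; rw [hπ] at this; simpa using this
    ext a b
    by_cases ha : a = π i
    · by_cases hb : b = π j
      · subst ha hb
        simp [Matrix.smul_apply, hM]
      · have := congrFun (congrFun hR a) b
        rw [Matrix.mul_single_apply_of_ne (hbj := hb)] at this
        rw [← this]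
        simp [Matrix.single, Ne.symm hb]
    · have := congrFun (congrFun hL a) b
      rw [Matrix.single_mul_apply_of_ne (h := ha)] at this
      rw [← this]
      simp [Matrix.single, Ne.symm ha]
  · intro i
    simp only [hπ, Matrix.single_apply_same]
end

section
/- Define the quantum addition channel output ρ ⊞_α σ = α ρ + (1−α) σ − i√(α(1−α)) [ρ, σ] for density matrices ρ, σ and α ∈ [0,1]. If E(X) = A ⊙ X is a Schur multiplier map with A ⪰ 0, A_{ii}=1, and σ is diagonal, then E(ρ) ⊞_α E(σ) = E(ρ ⊞_α σ). -/
open Matrix ComplexOrder in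
/-- The quantum addition channel combination `ρ ⊞_α σ`. -/
noncomputable def quantumAdd {d : ℕ} (α : ℝ) (ρ σ : Matrix (Fin d) (Fin d) ℂ) :
    Matrix (Fin d) (Fin d) ℂ :=
  (α : ℂ) • ρ + ((1 - α : ℝ) : ℂ) • σ -
    (Complex.I * (Real.sqrt (α * (1 - α)) : ℂ)) • (ρ * σ - σ * ρ)

open Matrix in
lemma schur_mul_right_diag {d : ℕ} (A ρ σ : Matrix (Fin d) (Fin d) ℂ)
    (hdiag : ∀ i, A i i = 1) (hσ : σ.IsDiag) :
    (A ⊙ ρ) * (A ⊙ σ) = A ⊙ (ρ * σ) := by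
  ext i j
  simp only [mul_apply, hadamard_apply]
  rw [Finset.sum_eq_single j, Finset.sum_eq_single j]
  · rw [hdiag j]; ring
  · intro k _ hk
    rw [hσ hk]; ring
  · simp
  · intro k _ hk
    rw [hσ hk]; ring
  · simp

open Matrix in
lemma schur_mul_left_diag {d : ℕ} (A ρ σ : Matrix (Fin d) (Fin d) ℂ)
    (hdiag : ∀ i, A i i = 1) (hσ : σ.IsDiag) :
    (A ⊙ σ) * (A ⊙ ρ) = A ⊙ (σ * ρ) := by
  ext i j
  simp only [mul_apply, hadamard_apply]
  rw [Finset.sum_eq_single i, Finset.sum_eq_single i]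
  · rw [hdiag i]; ring
  · intro k _ hk
    rw [hσ hk.symm]; ring
  · simp
  · intro k _ hk
    rw [hσ hk.symm]; ring
  · simp

open Matrix ComplexOrder in
theorem schur_commutes_with_quantum_addition {d : ℕ} (α : ℝ)
    (hα : α ∈ Set.Icc (0 : ℝ) 1)
    (A : Matrix (Fin d) (Fin d) ℂ) (hA : A.PosSemidef) (hdiag : ∀ i, A i i = 1)
    (ρ σ : Matrix (Fin d) (Fin d) ℂ)
    (hρ : ρ.PosSemidef) (hρtr : ρ.trace = 1)
    (hσpsd : σ.PosSemidef) (hσtr : σ.trace = 1) (hσ : σ.IsDiag) :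
    quantumAdd α (A ⊙ ρ) (A ⊙ σ) = A ⊙ quantumAdd α ρ σ := by
  unfold quantumAdd
  rw [schur_mul_right_diag A ρ σ hdiag hσ, schur_mul_left_diag A ρ σ hdiag hσ]
  ext i j
  simp only [hadamard_apply, Matrix.sub_apply, Matrix.add_apply, Matrix.smul_apply, smul_eq_mul]
  ring
end
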